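/- arXiv:2005.02391 — 3 statements merged into one kernel-verified Lean document; each statement's English description precedes it below -/
import Mathlib

section
/- For all natural numbers M ≥ 1 and all j with 0 ≤ j ≤ M, the identity ∑_{k=0}^{j} (-1)^{j-k} 2^{4k} (C(2(M−k), j−k) − C(2(M−k), j−1−k)) C(M+k, 2k) = C(4M+2, 2j) holds. -/
open Polynomial Finset

lemma coeff_aux (a : ℚ) (e k : ℕ) :
    ((Polynomial.C a) * X ^ e).coeff k = if e = k then a else 0 := by
  rw [coeff_C_mul, coeff_X_pow]
  simp [eq_comm]

-- coefficient of (1 - X^2)^n at even index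
lemma coeff_one_sub_X_sq_pow (n m : ℕ) :
    ((1 - X ^ 2 : ℚ[X]) ^ n).coeff (2 * m) = (-1 : ℚ) ^ m * n.choose m := by
  have h : (1 - X ^ 2 : ℚ[X]) = (-X^2) + 1 := by ring
  rw [h, add_pow, finset_sum_coeff]
  have hterm : ∀ i ∈ range (n+1),
      ((-X^2 : ℚ[X]) ^ i * 1 ^ (n - i) * (n.choose i : ℚ[X])).coeff (2*m)
        = if i = m then (-1:ℚ)^m * n.choose m else 0 := by
    intro i hi
    have h2 : ((-X^2 : ℚ[X]) ^ i * 1 ^ (n - i) * (n.choose i : ℚ[X]))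
        = Polynomial.C ((-1:ℚ)^i * n.choose i) * X ^ (2*i) := by
      simp only [map_mul, map_pow, map_neg, Polynomial.C_1, Polynomial.C_eq_natCast]
      ring
    rw [h2, coeff_aux]
    by_cases him : i = m
    · subst him; simp
    · have h3 : ¬ (2*i = 2*m) := by omega
      simp [h3, him]
  rw [Finset.sum_congr rfl hterm, Finset.sum_ite_eq' (range (n+1)) m]
  by_cases hm : m ∈ range (n+1)
  · simp [hm]
  · have : n.choose m = 0 := Nat.choose_eq_zero_of_lt (by simp at hm; omega)
    simp [hm, this]

lemma coeff_one_sub_X_pow (n k : ℕ) :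
    ((1 - X : ℚ[X]) ^ n).coeff k = (-1 : ℚ) ^ k * n.choose k := by
  have h : (1 - X : ℚ[X]) = (-X) + 1 := by ring
  rw [h, add_pow, finset_sum_coeff]
  have hterm : ∀ i ∈ range (n+1),
      ((-X : ℚ[X]) ^ i * 1 ^ (n - i) * (n.choose i : ℚ[X])).coeff k
        = if i = k then (-1:ℚ)^k * n.choose k else 0 := by
    intro i hi
    have h2 : ((-X : ℚ[X]) ^ i * 1 ^ (n - i) * (n.choose i : ℚ[X]))
        = Polynomial.C ((-1:ℚ)^i * n.choose i) * X ^ i := by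
      simp only [map_mul, map_pow, map_neg, Polynomial.C_1, Polynomial.C_eq_natCast]
      ring
    rw [h2, coeff_aux]
    by_cases him : i = k
    · subst him; simp
    · simp [him]
  rw [Finset.sum_congr rfl hterm, Finset.sum_ite_eq' (range (n+1)) k]
  by_cases hm : k ∈ range (n+1)
  · simp [hm]
  · have : n.choose k = 0 := Nat.choose_eq_zero_of_lt (by simp at hm; omega)
    simp [hm, this]
noncomputable def Apoly (M : ℕ) : ℚ[X] :=
  ∑ k ∈ range (M+1),
    Polynomial.C (((M+k).choose (2*k) : ℚ) * 16^k) * ((1 - X^2)^2)^(M-k) * X^(2*k)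

noncomputable def Bsum (M : ℕ) : ℚ[X] :=
  ∑ k ∈ range (M+2),
    Polynomial.C (((M+2+k).choose (2*k+2) : ℚ) * 16^(k+1)) * ((1 - X^2)^2)^(M+1-k) * X^(2*k+2)

noncomputable def Dsum (M : ℕ) : ℚ[X] :=
  ∑ k ∈ range (M+2),
    Polynomial.C (((M+1+k).choose (2*k+2) : ℚ) * 16^(k+1)) * ((1 - X^2)^2)^(M+1-k) * X^(2*k+2)

lemma key_choose (n r : ℕ) :
    (((n+2).choose (r+2) : ℚ)) = n.choose r + 2*(n+1).choose (r+2) - n.choose (r+2) := by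
  have h : (n+2).choose (r+2) + n.choose (r+2) = n.choose r + 2*((n+1).choose (r+2)) := by
    simp [Nat.choose_succ_succ]
    ring
  have := congrArg (fun x : ℕ => (x : ℚ)) h
  push_cast at this
  linarith

lemma h1_lemma (M : ℕ) :
    Apoly (M+2) = ((1 - X^2)^2 : ℚ[X])^(M+2) + (16*X^2) * Apoly (M+1) + 2 * Bsum M - Dsum M := by
  rw [show Apoly (M+2) = ∑ k ∈ range (M+3),
      Polynomial.C (((M+2+k).choose (2*k) : ℚ) * 16^k) * ((1 - X^2)^2)^(M+2-k) * X^(2*k) from rfl]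
  rw [Finset.sum_range_succ']
  have hterm : ∀ k ∈ range (M+2),
      Polynomial.C (((M+2+(k+1)).choose (2*(k+1)) : ℚ) * 16^(k+1)) * ((1 - X^2)^2 : ℚ[X])^(M+2-(k+1)) * X^(2*(k+1))
      = (16*X^2) * (Polynomial.C (((M+1+k).choose (2*k) : ℚ) * 16^k) * ((1 - X^2)^2)^(M+1-k) * X^(2*k))
        + 2 * (Polynomial.C (((M+2+k).choose (2*k+2) : ℚ) * 16^(k+1)) * ((1 - X^2)^2)^(M+1-k) * X^(2*k+2))
        - (Polynomial.C (((M+1+k).choose (2*k+2) : ℚ) * 16^(k+1)) * ((1 - X^2)^2)^(M+1-k) * X^(2*k+2)) := by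
    intro k hk
    have e1 : M+2-(k+1) = M+1-k := by omega
    have e2 : 2*(k+1) = 2*k+2 := by ring
    have e3 : M+2+(k+1) = (M+1+k)+2 := by ring
    rw [e1, e2, e3, key_choose (M+1+k) (2*k)]
    have e4 : (M+1+k+1) = M+2+k := by ring
    rw [e4]
    simp only [map_mul, map_add, map_sub, map_ofNat, map_pow]
    ring
  rw [Finset.sum_congr rfl hterm]
  simp only [Finset.sum_add_distrib, Finset.sum_sub_distrib, ← Finset.mul_sum]
  rw [show (∑ k ∈ range (M+2),
      Polynomial.C (((M+1+k).choose (2*k) : ℚ) * 16^k) * ((1 - X^2)^2 : ℚ[X])^(M+1-k) * X^(2*k)) = Apoly (M+1) from rfl]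
  rw [show (∑ k ∈ range (M+2),
      Polynomial.C (((M+2+k).choose (2*k+2) : ℚ) * 16^(k+1)) * ((1 - X^2)^2 : ℚ[X])^(M+1-k) * X^(2*k+2)) = Bsum M from rfl]
  rw [show (∑ k ∈ range (M+2),
      Polynomial.C (((M+1+k).choose (2*k+2) : ℚ) * 16^(k+1)) * ((1 - X^2)^2 : ℚ[X])^(M+1-k) * X^(2*k+2)) = Dsum M from rfl]
  have ht0 : Polynomial.C (((M+2+0).choose (2*0) : ℚ) * 16^0) * ((1 - X^2)^2 : ℚ[X])^(M+2-0) * X^(2*0)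
      = ((1 - X^2)^2 : ℚ[X])^(M+2) := by
    norm_num
  rw [ht0]
  ring

lemma h2_lemma (M : ℕ) :
    ((1 - X^2)^2 : ℚ[X]) * Apoly (M+1) = ((1 - X^2)^2 : ℚ[X])^(M+2) + Bsum M := by
  rw [show Apoly (M+1) = ∑ k ∈ range (M+2),
      Polynomial.C (((M+1+k).choose (2*k) : ℚ) * 16^k) * ((1 - X^2)^2)^(M+1-k) * X^(2*k) from rfl]
  rw [Finset.mul_sum]
  have hterm : ∀ k ∈ range (M+2),
      ((1 - X^2)^2 : ℚ[X]) * (Polynomial.C (((M+1+k).choose (2*k) : ℚ) * 16^k) * ((1 - X^2)^2)^(M+1-k) * X^(2*k))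
      = Polynomial.C (((M+1+k).choose (2*k) : ℚ) * 16^k) * ((1 - X^2)^2)^(M+2-k) * X^(2*k) := by
    intro k hk
    simp only [Finset.mem_range] at hk
    have e1 : M+2-k = (M+1-k)+1 := by omega
    rw [e1, pow_succ]
    ring
  rw [Finset.sum_congr rfl hterm, Finset.sum_range_succ']
  have hterm2 : ∀ k ∈ range (M+1),
      Polynomial.C (((M+1+(k+1)).choose (2*(k+1)) : ℚ) * 16^(k+1)) * ((1 - X^2)^2 : ℚ[X])^(M+2-(k+1)) * X^(2*(k+1))
      = Polynomial.C (((M+2+k).choose (2*k+2) : ℚ) * 16^(k+1)) * ((1 - X^2)^2)^(M+1-k) * X^(2*k+2) := by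
    intro k hk
    have e1 : M+2-(k+1) = M+1-k := by omega
    have e2 : 2*(k+1) = 2*k+2 := by ring
    have e3 : M+1+(k+1) = M+2+k := by ring
    rw [e1, e2, e3]
  rw [Finset.sum_congr rfl hterm2]
  have htop : Bsum M = (∑ k ∈ range (M+1),
      Polynomial.C (((M+2+k).choose (2*k+2) : ℚ) * 16^(k+1)) * ((1 - X^2)^2)^(M+1-k) * X^(2*k+2)) := by
    rw [show Bsum M = ∑ k ∈ range (M+2),
      Polynomial.C (((M+2+k).choose (2*k+2) : ℚ) * 16^(k+1)) * ((1 - X^2)^2)^(M+1-k) * X^(2*k+2) from rfl]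
    rw [Finset.sum_range_succ]
    have : ((M+2+(M+1)).choose (2*(M+1)+2) : ℚ) = 0 := by
      norm_cast
      exact Nat.choose_eq_zero_of_lt (by omega)
    rw [this]
    simp
  rw [htop]
  have ht0 : Polynomial.C (((M+1+0).choose (2*0) : ℚ) * 16^0) * ((1 - X^2)^2 : ℚ[X])^(M+2-0) * X^(2*0)
      = ((1 - X^2)^2 : ℚ[X])^(M+2) := by
    norm_num
  rw [ht0]
  ring

lemma h3_lemma (M : ℕ) :
    (((1 - X^2)^2 : ℚ[X]))^2 * Apoly M = ((1 - X^2)^2 : ℚ[X])^(M+2) + Dsum M := by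
  rw [show Apoly M = ∑ k ∈ range (M+1),
      Polynomial.C (((M+k).choose (2*k) : ℚ) * 16^k) * ((1 - X^2)^2)^(M-k) * X^(2*k) from rfl]
  rw [Finset.mul_sum]
  have hterm : ∀ k ∈ range (M+1),
      (((1 - X^2)^2 : ℚ[X]))^2 * (Polynomial.C (((M+k).choose (2*k) : ℚ) * 16^k) * ((1 - X^2)^2)^(M-k) * X^(2*k))
      = Polynomial.C (((M+k).choose (2*k) : ℚ) * 16^k) * ((1 - X^2)^2)^(M+2-k) * X^(2*k) := by
    intro k hk
    simp only [Finset.mem_range] at hk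
    have e1 : M+2-k = (M-k)+2 := by omega
    rw [e1, pow_add]
    ring
  rw [Finset.sum_congr rfl hterm, Finset.sum_range_succ']
  have hterm2 : ∀ k ∈ range M,
      Polynomial.C (((M+(k+1)).choose (2*(k+1)) : ℚ) * 16^(k+1)) * ((1 - X^2)^2 : ℚ[X])^(M+2-(k+1)) * X^(2*(k+1))
      = Polynomial.C (((M+1+k).choose (2*k+2) : ℚ) * 16^(k+1)) * ((1 - X^2)^2)^(M+1-k) * X^(2*k+2) := by
    intro k hk
    have e1 : M+2-(k+1) = M+1-k := by omega
    have e2 : 2*(k+1) = 2*k+2 := by ring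
    have e3 : M+(k+1) = M+1+k := by ring
    rw [e1, e2, e3]
  rw [Finset.sum_congr rfl hterm2]
  have htop : Dsum M = (∑ k ∈ range M,
      Polynomial.C (((M+1+k).choose (2*k+2) : ℚ) * 16^(k+1)) * ((1 - X^2)^2)^(M+1-k) * X^(2*k+2)) := by
    rw [show Dsum M = ∑ k ∈ range (M+2),
      Polynomial.C (((M+1+k).choose (2*k+2) : ℚ) * 16^(k+1)) * ((1 - X^2)^2)^(M+1-k) * X^(2*k+2) from rfl]
    rw [Finset.sum_range_succ, Finset.sum_range_succ]
    have z1 : ((M+1+M).choose (2*M+2) : ℚ) = 0 := by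
      norm_cast
      exact Nat.choose_eq_zero_of_lt (by omega)
    have z2 : ((M+1+(M+1)).choose (2*(M+1)+2) : ℚ) = 0 := by
      norm_cast
      exact Nat.choose_eq_zero_of_lt (by omega)
    rw [z1, z2]
    simp
  rw [htop]
  have ht0 : Polynomial.C (((M+0).choose (2*0) : ℚ) * 16^0) * ((1 - X^2)^2 : ℚ[X])^(M+2-0) * X^(2*0)
      = ((1 - X^2)^2 : ℚ[X])^(M+2) := by
    norm_num
  rw [ht0]
  ring

lemma Apoly_rec (M : ℕ) :
    Apoly (M+2) = (16*X^2 + 2*(1 - X^2)^2) * Apoly (M+1) - ((1 - X^2)^2)^2 * Apoly M := by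
  linear_combination h1_lemma M - 2 * h2_lemma M + h3_lemma M

lemma Apoly_closed (M : ℕ) :
    2 * (1 + X^2) * Apoly M = (1+X : ℚ[X])^(4*M+2) + (1-X)^(4*M+2) := by
  induction M using Nat.twoStepInduction with
  | zero =>
    rw [show Apoly 0 = ∑ k ∈ range 1,
      Polynomial.C (((0+k).choose (2*k) : ℚ) * 16^k) * ((1 - X^2)^2)^(0-k) * X^(2*k) from rfl]
    simp
    ring
  | one =>
    rw [show Apoly 1 = ∑ k ∈ range 2,
      Polynomial.C (((1+k).choose (2*k) : ℚ) * 16^k) * ((1 - X^2)^2)^(1-k) * X^(2*k) from rfl]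
    rw [Finset.sum_range_succ, Finset.sum_range_succ]
    norm_num [map_ofNat]
    ring
  | more M ih1 ih2 =>
    rw [Apoly_rec M]
    have e2 : (4*(M+2)+2) = (4*M+2)+8 := by ring
    have e1 : (4*(M+1)+2) = (4*M+2)+4 := by ring
    rw [e2, pow_add, pow_add]
    rw [e1, pow_add, pow_add] at ih2
    linear_combination (16*X^2 + 2*(1 - X^2)^2) * ih2 - ((1 - X^2)^2)^2 * ih1

lemma coeff_Apoly (M j : ℕ) (hj : j ≤ M) :
    (Apoly M).coeff (2*j)
      = ∑ k ∈ range (j+1),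
          (-1:ℚ)^(j-k) * 16^k * ((2*(M-k)).choose (j-k)) * ((M+k).choose (2*k)) := by
  rw [show Apoly M = ∑ k ∈ range (M+1),
      Polynomial.C (((M+k).choose (2*k) : ℚ) * 16^k) * ((1 - X^2)^2)^(M-k) * X^(2*k) from rfl]
  rw [finset_sum_coeff]
  have hterm : ∀ k ∈ range (M+1),
      (Polynomial.C (((M+k).choose (2*k) : ℚ) * 16^k) * ((1 - X^2)^2 : ℚ[X])^(M-k) * X^(2*k)).coeff (2*j)
      = if k ≤ j then (-1:ℚ)^(j-k) * 16^k * ((2*(M-k)).choose (j-k)) * ((M+k).choose (2*k)) else 0 := by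
    intro k hk
    rw [coeff_mul_X_pow']
    by_cases hkj : k ≤ j
    · have h2 : 2*k ≤ 2*j := by omega
      rw [if_pos h2, if_pos hkj, coeff_C_mul]
      rw [show ((1 - X^2)^2 : ℚ[X])^(M-k) = (1 - X^2 : ℚ[X])^(2*(M-k)) by rw [← pow_mul]]
      rw [show 2*j - 2*k = 2*(j-k) by omega]
      rw [coeff_one_sub_X_sq_pow]
      ring
    · have h2 : ¬ (2*k ≤ 2*j) := by omega
      rw [if_neg h2, if_neg hkj]
  rw [Finset.sum_congr rfl hterm]
  rw [← Finset.sum_subset (Finset.range_subset_range.2 (by omega : j+1 ≤ M+1))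
      (fun x hx hx2 => by
        rw [if_neg]
        simp only [Finset.mem_range] at hx2
        omega)]
  apply Finset.sum_congr rfl
  intro k hk
  simp only [Finset.mem_range] at hk
  rw [if_pos (by omega)]

theorem stmt_2 (M j : ℕ) (hM : 1 ≤ M) (hj : j ≤ M) :
    ∑ k ∈ Finset.range (j + 1),
      (-1 : ℚ) ^ (j - k) * 2 ^ (4 * k) *
        (((2 * (M - k)).choose (j - k) : ℚ) -
          (if k + 1 ≤ j then ((2 * (M - k)).choose (j - 1 - k) : ℚ) else 0)) *
        ((M + k).choose (2 * k))
    = ((4 * M + 2).choose (2 * j) : ℚ) := by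
  have hpow : ∀ k : ℕ, (2:ℚ)^(4*k) = 16^k := by
    intro k
    rw [pow_mul]
    norm_num
  rcases Nat.eq_zero_or_pos j with hj0 | hjpos
  · subst hj0
    simp
  obtain ⟨j', rfl⟩ : ∃ j', j = j' + 1 := ⟨j - 1, by omega⟩
  -- split the sum
  have hsplit : ∑ k ∈ Finset.range (j' + 1 + 1),
      (-1 : ℚ) ^ (j' + 1 - k) * 2 ^ (4 * k) *
        (((2 * (M - k)).choose (j' + 1 - k) : ℚ) -
          (if k + 1 ≤ j' + 1 then ((2 * (M - k)).choose (j' + 1 - 1 - k) : ℚ) else 0)) *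
        ((M + k).choose (2 * k))
      = (∑ k ∈ range (j'+1+1), (-1:ℚ)^(j'+1-k) * 16^k * ((2*(M-k)).choose (j'+1-k)) * ((M+k).choose (2*k)))
        - (∑ k ∈ range (j'+1+1), (-1:ℚ)^(j'+1-k) * 16^k *
            (if k + 1 ≤ j' + 1 then ((2*(M-k)).choose (j'+1-1-k) : ℚ) else 0) * ((M+k).choose (2*k))) := by
    rw [← Finset.sum_sub_distrib]
    apply Finset.sum_congr rfl
    intro k hk
    rw [hpow k]
    ring
  rw [hsplit]
  have hfirst : (∑ k ∈ range (j'+1+1), (-1:ℚ)^(j'+1-k) * 16^k *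
        ((2*(M-k)).choose (j'+1-k)) * ((M+k).choose (2*k)))
      = (Apoly M).coeff (2*(j'+1)) := (coeff_Apoly M (j'+1) hj).symm
  have hsecond : (∑ k ∈ range (j'+1+1), (-1:ℚ)^(j'+1-k) * 16^k *
        (if k + 1 ≤ j' + 1 then ((2*(M-k)).choose (j'+1-1-k) : ℚ) else 0) * ((M+k).choose (2*k)))
      = - (Apoly M).coeff (2*j') := by
    rw [coeff_Apoly M j' (by omega)]
    rw [Finset.sum_range_succ, if_neg (by omega), mul_zero, zero_mul, add_zero]
    have hterm : ∀ k ∈ range (j'+1),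
        (-1:ℚ)^(j'+1-k) * 16^k *
          (if k + 1 ≤ j' + 1 then ((2*(M-k)).choose (j'+1-1-k) : ℚ) else 0) * ((M+k).choose (2*k))
        = -((-1:ℚ)^(j'-k) * 16^k * ((2*(M-k)).choose (j'-k)) * ((M+k).choose (2*k))) := by
      intro k hk
      simp only [Finset.mem_range] at hk
      rw [if_pos (by omega)]
      rw [show j'+1-1-k = j'-k by omega, show j'+1-k = (j'-k)+1 by omega, pow_succ]
      ring
    rw [Finset.sum_congr rfl hterm]
    rw [Finset.sum_neg_distrib]
  rw [hfirst, hsecond, sub_neg_eq_add]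
  -- now use the closed form
  have hclosed := congrArg (fun p : ℚ[X] => p.coeff (2*(j'+1))) (Apoly_closed M)
  have e : (2*(1+X^2)*Apoly M : ℚ[X]) = Polynomial.C 2 * Apoly M + Polynomial.C 2 * (Apoly M * X^2) := by
    simp only [map_ofNat]
    ring
  rw [e] at hclosed
  rw [coeff_add, coeff_C_mul, coeff_C_mul, coeff_mul_X_pow'] at hclosed
  rw [if_pos (by omega : 2 ≤ 2*(j'+1))] at hclosed
  rw [show 2*(j'+1) - 2 = 2*j' by omega] at hclosed
  rw [coeff_add, coeff_one_add_X_pow, coeff_one_sub_X_pow] at hclosed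
  have heven : ((-1:ℚ))^(2*(j'+1)) = 1 := by
    rw [pow_mul]; norm_num
  rw [heven, one_mul] at hclosed
  linarith
end

section
/- For all natural numbers M ≥ 1 and all j with 0 ≤ j ≤ M−1, the identity ∑_{k=0}^{j} (-1)^{j-k} 2^{4k+2} ((M−k)/(2k+1)) (C(2(M−1−k), j−k) − C(2(M−1−k), j−1−k)) C(M+k, 2k) = C(4M, 2j+1) holds over the rationals. -/
open Polynomial Finset

noncomputable def TT (M k : ℕ) : ℚ[X] :=
  16^k * (((M+k).choose (2*k+1) : ℕ) : ℚ[X]) * X^(2*k) * (1 - X^2)^(2*(M-1-k))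

lemma TT_eq_zero {M k : ℕ} (h : M ≤ k) : TT M k = 0 := by
  simp [TT, Nat.choose_eq_zero_of_lt (by omega : M + k < 2*k+1)]

lemma chooseD (a r : ℕ) : (a+2).choose (r+2) + a.choose (r+2)
    = 2 * ((a+1).choose (r+2)) + a.choose r := by
  have p1 : (a+2).choose (r+2) = (a+1).choose (r+1) + (a+1).choose (r+2) :=
    Nat.choose_succ_succ (a+1) (r+1)
  have p2 : (a+1).choose (r+1) = a.choose r + a.choose (r+1) :=
    Nat.choose_succ_succ a r
  have p3 : (a+1).choose (r+2) = a.choose (r+1) + a.choose (r+2) :=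
    Nat.choose_succ_succ a (r+1)
  omega

lemma TT_pointwise (M i : ℕ) (hi : i ≤ M) :
    TT (M+2) (i+1) + (1 - X^2)^4 * TT M (i+1)
      = 2*(1 - X^2)^2 * TT (M+1) (i+1) + 16*X^2 * TT (M+1) i := by
  rcases Nat.lt_or_ge i (M-1) with hlt | hge
  · simp only [TT]
    rw [show 2*(M+2-1-(i+1)) = 2*(M-i) by omega,
      show 2*(M-1-(i+1)) = 2*(M-i) - 4 by omega,
      show 2*(M+1-1-(i+1)) = 2*(M-i) - 2 by omega,
      show 2*(M+1-1-i) = 2*(M-i) by omega,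
      show M+2+(i+1) = M+1+i+2 by omega, show M+(i+1) = M+1+i by omega,
      show M+1+(i+1) = M+1+i+1 by omega, show 2*(i+1)+1 = 2*i+1+2 by omega]
    have hc : (((M+1+i+2).choose (2*i+1+2) : ℕ) : ℚ[X]) + (((M+1+i).choose (2*i+1+2):ℕ) : ℚ[X])
        = 2 * (((M+1+i+1).choose (2*i+1+2):ℕ):ℚ[X]) + (((M+1+i).choose (2*i+1):ℕ):ℚ[X]) := by
      exact_mod_cast congrArg (Nat.cast : ℕ → ℚ[X]) (chooseD (M+1+i) (2*i+1))
    have e2 : (1-X^2:ℚ[X])^4 * (1-X^2)^(2*(M-i)-4) = (1-X^2)^(2*(M-i)) := by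
      rw [← pow_add]; congr 1; omega
    have e3 : (2:ℚ[X])*(1-X^2)^2 * (1-X^2)^(2*(M-i)-2) = 2*(1-X^2)^(2*(M-i)) := by
      rw [mul_assoc, ← pow_add]; congr 2; omega
    linear_combination (16:ℚ[X])^(i+1) * X^(2*(i+1)) * (1-X^2)^(2*(M-i)) * hc
      + (16:ℚ[X])^(i+1) * X^(2*(i+1)) * (((M+1+i).choose (2*i+1+2):ℕ):ℚ[X]) * e2
      - (16:ℚ[X])^(i+1) * X^(2*(i+1)) * (((M+1+i+1).choose (2*i+1+2):ℕ):ℚ[X]) * e3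
  · rcases Nat.lt_or_ge i M with hlt2 | hge2
    · have hMi : M = i + 1 := by omega
      subst hMi
      simp only [TT]
      rw [show 2*(i+1+2-1-(i+1)) = 2 by omega, show 2*(i+1-1-(i+1)) = 0 by omega,
        show 2*(i+1+1-1-(i+1)) = 0 by omega, show 2*(i+1+1-1-i) = 2 by omega,
        show i+1+2+(i+1) = (2*(i+1)+1)+1 by omega, Nat.choose_succ_self_right,
        show i+1+(i+1) = 2*i+2 by omega,
        Nat.choose_eq_zero_of_lt (by omega : 2*i+2 < 2*(i+1)+1),
        show i+1+1+(i+1) = 2*(i+1)+1 by omega, Nat.choose_self,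
        show i+1+1+i = (2*i+1)+1 by omega, Nat.choose_succ_self_right]
      push_cast
      ring
    · have hiM : M = i := by omega
      subst hiM
      simp only [TT]
      rw [show 2*(M+2-1-(M+1)) = 0 by omega, show 2*(M+1-1-M) = 0 by omega,
        show M+2+(M+1) = 2*M+3 by omega, show 2*(M+1)+1 = 2*M+3 by omega,
        Nat.choose_self,
        show M+(M+1) = 2*M+1 by omega,
        Nat.choose_eq_zero_of_lt (by omega : 2*M+1 < 2*M+3),
        show M+1+(M+1) = 2*M+2 by omega,
        Nat.choose_eq_zero_of_lt (by omega : 2*M+2 < 2*M+3),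
        show M+1+M = 2*M+1 by omega, Nat.choose_self]
      push_cast
      ring

lemma TT_pointwise0 (M : ℕ) :
    TT (M+2) 0 + (1 - X^2)^4 * TT M 0 = 2*(1 - X^2)^2 * TT (M+1) 0 + 0 := by
  match M with
  | 0 => simp [TT]
  | (m+1) =>
    simp only [TT]
    rw [show 2*(m+1+2-1-0) = (2*m)+4 by omega, show 2*(m+1-1-0) = 2*m by omega,
      show 2*(m+1+1-1-0) = 2*m+2 by omega,
      show m+1+2+0 = m+3 by omega, show m+1+0 = m+1 by omega,
      show m+1+1+0 = m+2 by omega, show 2*0+1 = 1 by omega,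
      Nat.choose_one_right, Nat.choose_one_right, Nat.choose_one_right]
    push_cast
    ring

lemma P_rec (M : ℕ) :
    (∑ k ∈ range (M+2), TT (M+2) k) + (1-X^2)^4 * ∑ k ∈ range M, TT M k
    = 2*((1-X^2)^2 + 8*X^2) * ∑ k ∈ range (M+1), TT (M+1) k := by
  have h1 : ∑ k ∈ range M, TT M k = ∑ k ∈ range (M+2), TT M k := by
    rw [Finset.sum_range_succ, Finset.sum_range_succ, TT_eq_zero (by omega),
      TT_eq_zero (by omega)]
    ring
  have h2 : ∑ k ∈ range (M+1), TT (M+1) k = ∑ k ∈ range (M+2), TT (M+1) k := by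
    rw [Finset.sum_range_succ _ (M+1), TT_eq_zero (by omega)]
    ring
  have h3 : (16:ℚ[X])*X^2 * ∑ k ∈ range (M+2), TT (M+1) k
      = ∑ k ∈ range (M+2), (fun k => match k with
          | 0 => 0
          | (i+1) => 16*X^2 * TT (M+1) i) k := by
    rw [← h2, Finset.sum_range_succ' _ (M+1)]
    simp [Finset.mul_sum]
  rw [h1, h2, show (2:ℚ[X])*((1-X^2)^2 + 8*X^2) * ∑ k ∈ range (M+2), TT (M+1) k
      = 2*(1-X^2)^2 * ∑ k ∈ range (M+2), TT (M+1) k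
        + 16*X^2 * ∑ k ∈ range (M+2), TT (M+1) k from by ring, h3,
    Finset.mul_sum, Finset.mul_sum, ← Finset.sum_add_distrib, ← Finset.sum_add_distrib]
  refine Finset.sum_congr rfl fun k hk => ?_
  simp only [Finset.mem_range] at hk
  match k with
  | 0 => exact TT_pointwise0 M
  | (i+1) => exact TT_pointwise M i (by omega)

lemma key : ∀ M : ℕ, (1+X:ℚ[X])^(4*M) - (1-X)^(4*M)
    = 8*X*(1+X^2) * ∑ k ∈ range M, TT M k := by
  have H : ∀ M : ℕ,
      ((1+X:ℚ[X])^(4*M) - (1-X)^(4*M) = 8*X*(1+X^2) * ∑ k ∈ range M, TT M k) ∧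
      ((1+X:ℚ[X])^(4*(M+1)) - (1-X)^(4*(M+1))
        = 8*X*(1+X^2) * ∑ k ∈ range (M+1), TT (M+1) k) := by
    intro M
    induction M with
    | zero =>
      constructor
      · simp
      · simp only [show 4*(0+1) = 4 by norm_num]
        rw [show range (0+1) = {0} from rfl, Finset.sum_singleton]
        simp [TT]
        ring
    | succ n ih =>
      refine ⟨ih.2, ?_⟩
      have e : (1+X:ℚ[X])^(4*(n+1+1)) - (1-X)^(4*(n+1+1))
          = 2*((1-X^2)^2 + 8*X^2) * ((1+X)^(4*(n+1)) - (1-X)^(4*(n+1)))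
            - (1-X^2)^4 * ((1+X)^(4*n) - (1-X)^(4*n)) := by
        rw [show 4*(n+1+1) = 4*n+8 by ring, show 4*(n+1) = 4*n+4 by ring,
          pow_add, pow_add, pow_add, pow_add]
        ring
      have hPr := P_rec n
      calc (1+X:ℚ[X])^(4*(n+1+1)) - (1-X)^(4*(n+1+1))
          = 2*((1-X^2)^2 + 8*X^2) * ((1+X)^(4*(n+1)) - (1-X)^(4*(n+1)))
            - (1-X^2)^4 * ((1+X)^(4*n) - (1-X)^(4*n)) := e
        _ = 2*((1-X^2)^2 + 8*X^2) * (8*X*(1+X^2) * ∑ k ∈ range (n+1), TT (n+1) k)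
            - (1-X^2)^4 * (8*X*(1+X^2) * ∑ k ∈ range n, TT n k) := by rw [ih.1, ih.2]
        _ = 8*X*(1+X^2) * ∑ k ∈ range (n+2), TT (n+2) k := by
            linear_combination (-(8*X*(1+X^2)) : ℚ[X]) * hPr
  exact fun M => (H M).1

lemma expand_one_sub_sq (n : ℕ) : (1 - X^2 : ℚ[X])^n
    = ∑ i ∈ range (n+1), C ((-1:ℚ)^i * (n.choose i : ℚ)) * X^(2*i) := by
  rw [sub_eq_add_neg, add_comm, add_pow]
  refine Finset.sum_congr rfl fun i hi => ?_
  rw [map_mul, map_pow, map_neg, C_1, Polynomial.C_eq_natCast, pow_mul]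
  ring

lemma coeff_one_sub_sq_even (n m : ℕ) :
    ((1 - X^2 : ℚ[X])^n).coeff (2*m) = (-1)^m * n.choose m := by
  rw [expand_one_sub_sq, finset_sum_coeff]
  simp only [coeff_C_mul, coeff_X_pow]
  rw [Finset.sum_eq_single m]
  · by_cases h : m ≤ n
    · simp
    · simp [Nat.choose_eq_zero_of_lt (by omega : n < m)]
  · intro b _ hb
    simp [Ne.symm hb]
  · intro h
    simp only [Finset.mem_range, not_lt] at h
    simp [Nat.choose_eq_zero_of_lt (by omega : n < m)]

lemma expand_one_sub (n : ℕ) : (1 - X : ℚ[X])^n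
    = ∑ i ∈ range (n+1), C ((-1:ℚ)^i * (n.choose i : ℚ)) * X^i := by
  rw [sub_eq_add_neg, add_comm, add_pow]
  refine Finset.sum_congr rfl fun i hi => ?_
  rw [map_mul, map_pow, map_neg, C_1, Polynomial.C_eq_natCast]
  ring

lemma coeff_one_sub (n d : ℕ) : ((1 - X : ℚ[X])^n).coeff d = (-1)^d * n.choose d := by
  rw [expand_one_sub, finset_sum_coeff]
  simp only [coeff_C_mul, coeff_X_pow]
  rw [Finset.sum_eq_single d]
  · by_cases h : d ≤ n
    · simp
    · simp [Nat.choose_eq_zero_of_lt (by omega : n < d)]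
  · intro b _ hb
    simp [Ne.symm hb]
  · intro h
    simp only [Finset.mem_range, not_lt] at h
    simp [Nat.choose_eq_zero_of_lt (by omega : n < d)]

lemma coeff_term (M k j : ℕ) :
    (8*X*(1+X^2) * TT M k).coeff (2*j+1)
    = (if k ≤ j then
        8 * 16^k * (((M+k).choose (2*k+1)) : ℚ) * (-1:ℚ)^(j-k) * ((2*(M-1-k)).choose (j-k))
       else 0)
      + (if k+1 ≤ j then
        8 * 16^k * (((M+k).choose (2*k+1)) : ℚ) * (-1:ℚ)^(j-1-k) * ((2*(M-1-k)).choose (j-1-k))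
       else 0) := by
  have h : 8*X*(1+X^2) * TT M k
      = C ((8:ℚ) * 16^k * ((M+k).choose (2*k+1)))
        * ((1-X^2)^(2*(M-1-k)) * X^(2*k+1) + (1-X^2)^(2*(M-1-k)) * X^(2*k+3)) := by
    simp only [TT, map_mul, map_pow, map_ofNat, Polynomial.C_eq_natCast]
    ring
  rw [h, coeff_C_mul, coeff_add, coeff_mul_X_pow', coeff_mul_X_pow']
  by_cases h1 : k ≤ j
  · rw [if_pos (by omega : 2*k+1 ≤ 2*j+1), show 2*j+1 - (2*k+1) = 2*(j-k) by omega,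
      coeff_one_sub_sq_even, if_pos h1]
    by_cases h2 : k+1 ≤ j
    · rw [if_pos (by omega : 2*k+3 ≤ 2*j+1), show 2*j+1 - (2*k+3) = 2*(j-1-k) by omega,
        coeff_one_sub_sq_even, if_pos h2]
      ring
    · rw [if_neg (by omega : ¬ (2*k+3 ≤ 2*j+1)), if_neg h2]
      ring
  · rw [if_neg (by omega : ¬ (2*k+1 ≤ 2*j+1)), if_neg (by omega : ¬ (2*k+3 ≤ 2*j+1)),
      if_neg h1, if_neg (by omega : ¬ (k+1 ≤ j))]
    ring

theorem stmt_3 (M j : ℕ) (hM : 1 ≤ M) (hj : j ≤ M - 1) :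
    ∑ k ∈ Finset.range (j + 1),
      (-1 : ℚ) ^ (j - k) * 2 ^ (4 * k + 2) * (((M : ℚ) - k) / (2 * k + 1)) *
        (((2 * (M - 1 - k)).choose (j - k) : ℚ) -
          (if k + 1 ≤ j then ((2 * (M - 1 - k)).choose (j - 1 - k) : ℚ) else 0)) *
        ((M + k).choose (2 * k))
    = ((4 * M).choose (2 * j + 1) : ℚ) := by
  have hkey := key M
  rw [Finset.mul_sum] at hkey
  have hco := congrArg (fun p => Polynomial.coeff p (2*j+1)) hkey
  simp only [coeff_sub, finset_sum_coeff] at hco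
  rw [show (1+X:ℚ[X]) = X+1 by ring, coeff_X_add_one_pow, coeff_one_sub] at hco
  rw [Odd.neg_one_pow ⟨j, by ring⟩] at hco
  rw [Finset.sum_congr rfl (fun k _ => coeff_term M k j)] at hco
  -- shrink range M to range (j+1)
  rw [← Finset.sum_subset (Finset.range_subset_range.mpr (by omega : j+1 ≤ M))
      (fun x _ hx => by
        simp only [Finset.mem_range, not_lt] at hx
        rw [if_neg (by omega), if_neg (by omega)]
        ring)] at hco
  -- now hco : C - (-C) = ∑_{k<j+1} (iteA + iteB)
  have h2C : ∑ k ∈ range (j+1),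
      ((if k ≤ j then
        8 * 16^k * (((M+k).choose (2*k+1)) : ℚ) * (-1:ℚ)^(j-k) * ((2*(M-1-k)).choose (j-k))
       else 0)
      + (if k+1 ≤ j then
        8 * 16^k * (((M+k).choose (2*k+1)) : ℚ) * (-1:ℚ)^(j-1-k) * ((2*(M-1-k)).choose (j-1-k))
       else 0)) = 2 * ((4*M).choose (2*j+1) : ℚ) := by
    rw [← hco]; ring
  have hterm : ∀ k, k ∈ range (j+1) →
      (-1 : ℚ) ^ (j - k) * 2 ^ (4 * k + 2) * (((M : ℚ) - k) / (2 * k + 1)) *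
        (((2 * (M - 1 - k)).choose (j - k) : ℚ) -
          (if k + 1 ≤ j then ((2 * (M - 1 - k)).choose (j - 1 - k) : ℚ) else 0)) *
        ((M + k).choose (2 * k))
      = ((if k ≤ j then
          8 * 16^k * (((M+k).choose (2*k+1)) : ℚ) * (-1:ℚ)^(j-k) * ((2*(M-1-k)).choose (j-k))
         else 0)
        + (if k+1 ≤ j then
          8 * 16^k * (((M+k).choose (2*k+1)) : ℚ) * (-1:ℚ)^(j-1-k) * ((2*(M-1-k)).choose (j-1-k))
         else 0)) / 2 := by
    intro k hk
    simp only [Finset.mem_range] at hk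
    have hkj : k ≤ j := by omega
    have hkM : k + 1 ≤ M := by omega
    have hp2 : (2:ℚ)^(4*k+2) = 4 * 16^k := by
      rw [pow_add, pow_mul]; norm_num; ring
    have hnat : (M+k).choose (2*k+1) * (2*k+1) = (M+k).choose (2*k) * (M-k) := by
      have h := Nat.choose_succ_right_eq (M+k) (2*k)
      rwa [show M+k-2*k = M-k by omega] at h
    have hcast : ((M+k).choose (2*k+1) : ℚ) * (2*k+1)
        = ((M+k).choose (2*k) : ℚ) * ((M:ℚ)-k) := by
      have := congrArg (Nat.cast : ℕ → ℚ) hnat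
      push_cast [Nat.cast_sub (by omega : k ≤ M)] at this
      convert this using 2 <;> push_cast <;> ring
    have hchoose : ((M:ℚ)-k)/(2*k+1) * ((M+k).choose (2*k))
        = ((M+k).choose (2*k+1) : ℚ) := by
      have hne : ((2:ℚ)*k+1) ≠ 0 := by positivity
      field_simp
      linear_combination -hcast
    rw [if_pos hkj, hp2]
    by_cases h2 : k + 1 ≤ j
    · rw [if_pos h2, if_pos h2]
      have hsgn : (-1:ℚ)^(j-1-k) = -(-1:ℚ)^(j-k) := by
        rw [show j-k = (j-1-k)+1 by omega, pow_succ]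
        ring
      rw [hsgn]
      linear_combination (4 * (16:ℚ)^k * (-1:ℚ)^(j-k) *
        (((2*(M-1-k)).choose (j-k) : ℚ) - ((2*(M-1-k)).choose (j-1-k) : ℚ))) * hchoose
    · rw [if_neg h2, if_neg h2]
      linear_combination (4 * (16:ℚ)^k * (-1:ℚ)^(j-k) * ((2*(M-1-k)).choose (j-k) : ℚ)) * hchoose
  rw [Finset.sum_congr rfl hterm, ← Finset.sum_div, h2C]
  ring
end

section
/- For every natural number M ≥ 1 and every nonzero complex number z, (1/2)(z + 1/z)^{4M} − (1/2)(z − 1/z)^{4M} = 4(z² + 1/z²) ∑_{k=0}^{M−1} 2^{4k} ((M−k)/(2k+1)) C(M+k, 2k) (z² − 1/z²)^{2(M−1−k)}. -/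
open Finset

lemma pascal_aux (m i : ℕ) : (m+3+i).choose (2*i+3) + (m+1+i).choose (2*i+3)
    = 2 * (m+2+i).choose (2*i+3) + (m+1+i).choose (2*i+1) := by
  have h1 : (m+3+i).choose (2*i+3) = (m+2+i).choose (2*i+2) + (m+2+i).choose (2*i+3) := by
    have := Nat.choose_succ_succ (m+2+i) (2*i+2)
    simpa [show m+3+i = m+2+i+1 by ring, show 2*i+3 = 2*i+2+1 by ring] using this
  have h2 : (m+2+i).choose (2*i+3) = (m+1+i).choose (2*i+2) + (m+1+i).choose (2*i+3) := by
    have := Nat.choose_succ_succ (m+1+i) (2*i+2)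
    simpa [show m+2+i = m+1+i+1 by ring] using this
  have h3 : (m+2+i).choose (2*i+2) = (m+1+i).choose (2*i+1) + (m+1+i).choose (2*i+2) := by
    have := Nat.choose_succ_succ (m+1+i) (2*i+1)
    simpa [show m+2+i = m+1+i+1 by ring, show 2*i+2 = 2*i+1+1 by ring] using this
  omega

noncomputable def Dfun (w : ℂ) (m : ℕ) : ℕ → ℂ
  | 0 => 0
  | (i+1) => 16^(i+1) * ((m+1+i).choose (2*i+1)) * w^(2*(m-i))

lemma sumrec (w : ℂ) (m : ℕ) :
    (∑ k ∈ range (m+2), (16:ℂ)^k * ((m+2+k).choose (2*k+1)) * w^(2*(m+1-k)))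
    = (2*w^2+16) * (∑ k ∈ range (m+1), (16:ℂ)^k * ((m+1+k).choose (2*k+1)) * w^(2*(m-k)))
    - w^4 * (∑ k ∈ range m, (16:ℂ)^k * ((m+k).choose (2*k+1)) * w^(2*(m-1-k))) := by
  have termwise : ∀ k ∈ range (m+1),
      (16:ℂ)^k * ((m+2+k).choose (2*k+1)) * w^(2*(m+1-k))
      = 2 * ((16:ℂ)^k * ((m+1+k).choose (2*k+1)) * w^(2*(m+1-k)))
        - (16:ℂ)^k * ((m+k).choose (2*k+1)) * w^(2*(m+1-k)) + Dfun w m k := by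
    intro k hk
    match k with
    | 0 =>
      simp only [Dfun, pow_zero, one_mul, Nat.mul_zero, Nat.zero_add, Nat.add_zero]
      have : ((m+2).choose 1 : ℂ) + (m.choose 1 : ℂ) = 2 * ((m+1).choose 1) := by
        have : (m+2).choose 1 + m.choose 1 = 2 * (m+1).choose 1 := by
          simp [Nat.choose_one_right]; omega
        exact_mod_cast congrArg (Nat.cast : ℕ → ℂ) this
      push_cast
      linear_combination w^(2*(m+1)) * this
    | (i+1) =>
      have hp := pascal_aux m i
      have hpC : ((m+3+i).choose (2*i+3) : ℂ) + ((m+1+i).choose (2*i+3) : ℂ)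
          = 2 * ((m+2+i).choose (2*i+3)) + ((m+1+i).choose (2*i+1)) := by
        exact_mod_cast congrArg (Nat.cast : ℕ → ℂ) hp
      have he : m+1-(i+1) = m-i := by omega
      simp only [Dfun, he]
      have e1 : m+2+(i+1) = m+3+i := by ring
      have e2 : 2*(i+1)+1 = 2*i+3 := by ring
      have e3 : m+(i+1) = m+1+i := by ring
      have e4 : m+1+(i+1) = m+2+i := by ring
      rw [e1, e2, e3, e4]
      linear_combination (16:ℂ)^(i+1) * w^(2*(m-i)) * hpC
  rw [Finset.sum_range_succ, Finset.sum_congr rfl termwise]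
  rw [Finset.sum_add_distrib, Finset.sum_sub_distrib, ← Finset.mul_sum]
  have hlast : ((m+2+(m+1)).choose (2*(m+1)+1) : ℂ) = 1 := by
    rw [show m+2+(m+1) = 2*(m+1)+1 by ring, Nat.choose_self]; norm_num
  rw [hlast, Nat.sub_self]
  have hA : w^2 * (∑ k ∈ range (m+1), (16:ℂ)^k * ((m+1+k).choose (2*k+1)) * w^(2*(m-k)))
      = ∑ k ∈ range (m+1), (16:ℂ)^k * ((m+1+k).choose (2*k+1)) * w^(2*(m+1-k)) := by
    rw [Finset.mul_sum]
    refine Finset.sum_congr rfl fun k hk => ?_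
    have hk' : k ≤ m := by simpa [Nat.lt_succ_iff] using hk
    have : 2*(m+1-k) = 2*(m-k)+2 := by omega
    rw [this, pow_add]; ring
  have h16 : 16 * (∑ k ∈ range (m+1), (16:ℂ)^k * ((m+1+k).choose (2*k+1)) * w^(2*(m-k)))
      = (∑ k ∈ range (m+1), Dfun w m k) + 16^(m+1) := by
    have h1 : ∀ k, (16:ℂ) * ((16:ℂ)^k * ((m+1+k).choose (2*k+1)) * w^(2*(m-k)))
        = Dfun w m (k+1) := by
      intro k; simp only [Dfun]; ring
    rw [Finset.mul_sum]
    rw [Finset.sum_congr rfl fun k _ => h1 k]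
    rw [Finset.sum_range_succ]
    rw [Finset.sum_range_succ' (fun k => Dfun w m k) m]
    have : Dfun w m (m+1) = 16^(m+1) := by
      simp [Dfun, Nat.sub_self, show m+1+m = 2*m+1 by ring, Nat.choose_self]
    rw [this]
    simp [Dfun]
  have hB : (∑ k ∈ range (m+1), (16:ℂ)^k * ((m+k).choose (2*k+1)) * w^(2*(m+1-k)))
      = w^4 * (∑ k ∈ range m, (16:ℂ)^k * ((m+k).choose (2*k+1)) * w^(2*(m-1-k))) := by
    rw [Finset.sum_range_succ]
    have hz : ((m+m).choose (2*m+1) : ℂ) = 0 := by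
      rw [Nat.choose_eq_zero_of_lt (by omega)]; norm_num
    rw [hz, Finset.mul_sum]
    have : ∀ k ∈ range m, (16:ℂ)^k * ((m+k).choose (2*k+1)) * w^(2*(m+1-k))
        = w^4 * ((16:ℂ)^k * ((m+k).choose (2*k+1)) * w^(2*(m-1-k))) := by
      intro k hk
      have hk' : k < m := by simpa using hk
      have : 2*(m+1-k) = 2*(m-1-k)+4 := by omega
      rw [this, pow_add]; ring
    rw [Finset.sum_congr rfl this]
    ring
  rw [pow_zero, mul_one, mul_one]
  linear_combination -2*hA - h16 - hB

lemma aux_main (z : ℂ) (hz : z ≠ 0) (M : ℕ) :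
    (1 / 2) * (z + 1 / z) ^ (4 * M) - (1 / 2) * (z - 1 / z) ^ (4 * M)
    = 4 * (z ^ 2 + 1 / z ^ 2) * ∑ k ∈ Finset.range M,
        (16:ℂ) ^ k * ((M + k).choose (2 * k + 1)) *
          (z ^ 2 - 1 / z ^ 2) ^ (2 * (M - 1 - k)) := by
  induction M using Nat.twoStepInduction with
  | zero => simp
  | one =>
    simp only [Finset.sum_range_one]
    norm_num
    field_simp
    ring
  | more m ih0 ih1 =>
    have hA : (z+1/z)^8 = (2*(z^2-1/z^2)^2+16)*((z+1/z)^4) - (z^2-1/z^2)^4 := by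
      field_simp; ring
    have hB : (z-1/z)^8 = (2*(z^2-1/z^2)^2+16)*((z-1/z)^4) - (z^2-1/z^2)^4 := by
      field_simp; ring
    have hrec := sumrec (z^2-1/z^2) m
    have e2 : ∀ k : ℕ, m+2-1-k = m+1-k := fun _ => rfl
    have e1 : ∀ k : ℕ, m+1-1-k = m-k := fun _ => rfl
    simp only [e1] at ih1
    simp only [e2]
    rw [hrec]
    linear_combination (2*(z^2-1/z^2)^2+16)*ih1 - (z^2-1/z^2)^4*ih0
      + (1/2)*(z+1/z)^(4*m)*hA - (1/2)*(z-1/z)^(4*m)*hB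

theorem stmt_7 (M : ℕ) (hM : 1 ≤ M) (z : ℂ) (hz : z ≠ 0) :
    (1 / 2) * (z + 1 / z) ^ (4 * M) - (1 / 2) * (z - 1 / z) ^ (4 * M)
    = 4 * (z ^ 2 + 1 / z ^ 2) * ∑ k ∈ Finset.range M,
        2 ^ (4 * k) * (((M : ℂ) - k) / (2 * k + 1)) * ((M + k).choose (2 * k)) *
          (z ^ 2 - 1 / z ^ 2) ^ (2 * (M - 1 - k)) := by
  have hsum : ∀ k ∈ Finset.range M,
      (2:ℂ) ^ (4 * k) * (((M : ℂ) - k) / (2 * k + 1)) * ((M + k).choose (2 * k)) *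
        (z ^ 2 - 1 / z ^ 2) ^ (2 * (M - 1 - k))
      = (16:ℂ)^k * ((M + k).choose (2*k+1)) * (z ^ 2 - 1 / z ^ 2) ^ (2 * (M - 1 - k)) := by
    intro k hk
    have hkM : k < M := Finset.mem_range.mp hk
    have h1 : (2:ℂ)^(4*k) = 16^k := by rw [pow_mul]; norm_num
    have hne : (2*(k:ℂ)+1) ≠ 0 := by
      have : ((2*k+1:ℕ):ℂ) ≠ 0 := Nat.cast_ne_zero.mpr (by omega)
      push_cast at this; exact this
    have hn : (M + k).choose (2*k+1) * (2*k+1) = (M + k).choose (2*k) * (M - k) := by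
      have := Nat.choose_succ_right_eq (M+k) (2*k)
      simpa [show M + k - 2*k = M - k by omega] using this
    have hc : ((M + k).choose (2*k+1) : ℂ) * (2*(k:ℂ)+1)
        = ((M + k).choose (2*k)) * ((M:ℂ) - k) := by
      have := congrArg (Nat.cast : ℕ → ℂ) hn
      push_cast [Nat.cast_sub hkM.le] at this
      linear_combination this
    have h2 : (((M : ℂ) - k) / (2 * k + 1)) * ((M + k).choose (2 * k))
        = ((M + k).choose (2*k+1) : ℂ) := by
      rw [div_mul_eq_mul_div, div_eq_iff hne]
      linear_combination -hc
    rw [h1]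
    linear_combination ((16:ℂ)^k * (z^2-1/z^2)^(2*(M-1-k))) * h2
  rw [Finset.sum_congr rfl hsum]
  exact aux_main z hz M
end
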